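/- Let d ≥ 1 and k, q, β ∈ ℕ with 0 ≤ β ≤ q − 2d + 2. Let x ∈ ℝ^{4^d} with x ≠ 0 and every component a k-bit floating-point number (i.e., x_i = σ_i·m_i·2^{t_i} with σ_i ∈ {1,−1}, m_i ∈ ℕ, m_i < 2^k, t_i ∈ ℤ). Let e_max = ⌊log₂‖x‖_∞⌋ and ℓ = e_max − q + 1. Define the ZFP round trip: (compression) z_i = sgn(x_i)·⌊2^{−ℓ}·|x_i|⌋, w = 𝐿̃_d(z), ŵ_i = ∑_{j > q+1−β} d_i(j)·(−2)^j where d_i is the negabinary digit function of w_i; (decompression) u = L_d^{−1}·ŵ (exact inverse transform over ℝ), x̂_i = 2^ℓ·fl_k(u_i). Then ‖x̂ − x‖_∞ ≤ K_β·‖x‖_∞, where K_β = (15/4)^d·( (1+ε_k)·( (8/3)·ε_β + ε_q·(1 + (8/3)·ε_β)·(k_L·(1+ε_q) + 1) ) + ε_k ), with ε_m = 2^{1−m} and k_L = (7/4)·(2^d − 1). -/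

import Mathlib

/-- Floor division by 2, modeling a one-bit right shift of a two's complement integer. -/
def rr (p : ℤ) : ℤ := ⌊(p : ℚ) / 2⌋

/-- The ZFP forward transform matrix `L`. -/
noncomputable def Lmat : Matrix (Fin 4) (Fin 4) ℝ :=
  (1 / 16 : ℝ) • !![4, 4, 4, 4; 5, 1, -1, -5; -4, 4, 4, -4; -2, 6, -6, 2]

/-- The inverse ZFP transform matrix `L⁻¹`. -/
noncomputable def Linv : Matrix (Fin 4) (Fin 4) ℝ :=
  (1 / 4 : ℝ) • !![4, 6, -4, -1; 4, 2, 4, 5; 4, -2, 4, -5; 4, -6, -4, 1]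

/-- The lossy forward transform `𝐿̃ : ℤ⁴ → ℤ⁴` of ZFP, executed step by step. -/
def Ltilde (a : Fin 4 → ℤ) : Fin 4 → ℤ :=
  let a1 := a 0
  let a2 := a 1
  let a3 := a 2
  let a4 := a 3
  let a1 := a1 + a4
  let a1 := rr a1
  let a4 := a4 - a1
  let a3 := a3 + a2
  let a3 := rr a3
  let a2 := a2 - a3
  let a1 := a1 + a3
  let a1 := rr a1
  let a3 := a3 - a1
  let a4 := a4 + a2
  let a4 := rr a4
  let a2 := a2 - a4
  let a4 := a4 + rr a2
  let a2 := a2 - rr a4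
  ![a1, a2, a3, a4]

/-- The `d`-fold Kronecker power `L_d = L ⊗ ⋯ ⊗ L`, indexed by tuples in `{0,1,2,3}^d`. -/
noncomputable def LmatD (d : ℕ) : Matrix (Fin d → Fin 4) (Fin d → Fin 4) ℝ :=
  fun v w => ∏ j, Lmat (v j) (w j)

/-- The `d`-fold Kronecker power `L_d^{−1} = L^{−1} ⊗ ⋯ ⊗ L^{−1}`. -/
noncomputable def LinvD (d : ℕ) : Matrix (Fin d → Fin 4) (Fin d → Fin 4) ℝ :=
  fun v w => ∏ j, Linv (v j) (w j)

/-- Applying `𝐿̃` along dimension `j`. -/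
def applyAlong {d : ℕ} (j : Fin d) (z : (Fin d → Fin 4) → ℤ) : (Fin d → Fin 4) → ℤ :=
  fun v => Ltilde (fun t => z (Function.update v j t)) (v j)

/-- The lossy `d`-dimensional forward transform `𝐿̃_d`: apply `𝐿̃` along dimension 1,
then dimension 2, …, then dimension `d`. -/
def LtildeD {d : ℕ} (z : (Fin d → Fin 4) → ℤ) : (Fin d → Fin 4) → ℤ :=
  (List.finRange d).foldl (fun acc j => applyAlong j acc) z

/-- Truncation of the binary expansion of `y` to its `k` most significant bits. -/
noncomputable def flk (k : ℕ) (y : ℝ) : ℝ :=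
  if y = 0 then 0
  else (if 0 ≤ y then 1 else -1) * 2 ^ (⌊Real.logb 2 |y|⌋ - (k : ℤ) + 1) *
    (⌊(2 : ℝ) ^ ((k : ℤ) - 1 - ⌊Real.logb 2 |y|⌋) * |y|⌋ : ℤ)

section ZfpAux

open Finset

/-! ### Auxiliary lemmas -/

lemma rr_bounds (p : ℤ) : ((p:ℝ) - 1 ≤ 2 * (rr p : ℝ)) ∧ (2 * (rr p :ℝ) ≤ (p:ℝ)) := by
  have h1 : ((rr p : ℚ)) ≤ (p:ℚ)/2 := Int.floor_le _
  have h2 : (p:ℚ)/2 < (rr p : ℚ) + 1 := Int.lt_floor_add_one _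
  have h1' : 2 * rr p ≤ p := by exact_mod_cast (by linarith : 2 * (rr p:ℚ) ≤ (p:ℚ))
  have h2' : p - 1 ≤ 2 * rr p := by
    have : p < 2 * rr p + 2 := by exact_mod_cast (by linarith : (p:ℚ) < 2 * (rr p:ℚ) + 2)
    omega
  have c1 : ((p - 1 : ℤ) : ℝ) ≤ ((2 * rr p : ℤ) : ℝ) := by exact_mod_cast h2'
  have c2 : ((2 * rr p : ℤ) : ℝ) ≤ ((p : ℤ) : ℝ) := by exact_mod_cast h1'
  push_cast at c1 c2
  exact ⟨c1, c2⟩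

lemma Ltilde_err (a : Fin 4 → ℤ) (i : Fin 4) :
    |((Ltilde a i : ℤ) : ℝ) - Matrix.mulVec Lmat (fun j => ((a j : ℤ) : ℝ)) i| ≤ 7/4 := by
  obtain ⟨h1a, h1b⟩ := rr_bounds (a 0 + a 3)
  obtain ⟨h2a, h2b⟩ := rr_bounds (a 2 + a 1)
  obtain ⟨h3a, h3b⟩ := rr_bounds (rr (a 0 + a 3) + rr (a 2 + a 1))
  obtain ⟨h4a, h4b⟩ := rr_bounds (a 3 - rr (a 0 + a 3) + (a 1 - rr (a 2 + a 1)))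
  obtain ⟨h5a, h5b⟩ := rr_bounds (a 1 - rr (a 2 + a 1) - rr (a 3 - rr (a 0 + a 3) + (a 1 - rr (a 2 + a 1))))
  obtain ⟨h6a, h6b⟩ := rr_bounds (rr (a 3 - rr (a 0 + a 3) + (a 1 - rr (a 2 + a 1))) +
    rr (a 1 - rr (a 2 + a 1) - rr (a 3 - rr (a 0 + a 3) + (a 1 - rr (a 2 + a 1)))))
  push_cast at h1a h1b h2a h2b h3a h3b h4a h4b h5a h5b h6a h6b
  rw [abs_le]
  fin_cases i <;>
    simp [Ltilde, Lmat, Matrix.mulVec, dotProduct, Fin.sum_univ_four] <;>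
    push_cast <;> constructor <;> linarith

noncomputable def MS {d : ℕ} (S : Finset (Fin d)) : Matrix (Fin d → Fin 4) (Fin d → Fin 4) ℝ :=
  fun v w => ∏ i, if i ∈ S then Lmat (v i) (w i) else (if v i = w i then 1 else 0)

lemma Mone_sum {d : ℕ} (j : Fin d) (v : Fin d → Fin 4) (f : (Fin d → Fin 4) → ℝ) :
    ∑ w, MS {j} v w * f w = ∑ t : Fin 4, Lmat (v j) t * f (Function.update v j t) := by
  classical
  have hinj : Function.Injective (Function.update v j) := fun s t h => by
    have := congrFun h j; simpa using this
  rw [← Finset.sum_subset (Finset.subset_univ (Finset.univ.image (Function.update v j)))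
    (by
      intro w _ hw
      have hne : ∃ i, i ≠ j ∧ v i ≠ w i := by
        by_contra hc
        push_neg at hc
        exact hw (Finset.mem_image.mpr ⟨w j, Finset.mem_univ _, funext fun i => by
          by_cases hij : i = j
          · subst hij; simp
          · rw [Function.update_of_ne hij]; exact (hc i hij)⟩)
      obtain ⟨i, hij, hvi⟩ := hne
      have : MS {j} v w = 0 := by
        unfold MS
        exact Finset.prod_eq_zero (Finset.mem_univ i) (by simp [hij, hvi])
      rw [this, zero_mul])]
  rw [Finset.sum_image (fun s _ t _ h => hinj h)]
  apply Finset.sum_congr rfl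
  intro t _
  congr 1
  unfold MS
  rw [Finset.prod_eq_single j (fun i _ hij => by simp [Function.update_of_ne hij, hij])
    (by simp)]
  simp

lemma Mone_mulVec {d : ℕ} (j : Fin d) (y : (Fin d → Fin 4) → ℝ) (v : Fin d → Fin 4) :
    (MS {j}).mulVec y v = ∑ t : Fin 4, Lmat (v j) t * y (Function.update v j t) :=
  Mone_sum j v y

lemma Mone_mul_MS {d : ℕ} (j : Fin d) (S : Finset (Fin d)) (hj : j ∉ S) :
    MS {j} * MS S = MS (insert j S) := by
  classical
  ext v w
  rw [Matrix.mul_apply, Mone_sum]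
  have hP : ∀ t : Fin 4, MS S (Function.update v j t) w
      = (if t = w j then 1 else 0) * ∏ i ∈ Finset.univ.erase j,
          (if i ∈ S then Lmat (v i) (w i) else if v i = w i then 1 else 0) := by
    intro t
    unfold MS
    rw [← Finset.mul_prod_erase Finset.univ _ (Finset.mem_univ j)]
    congr 1
    · simp [hj]
    · apply Finset.prod_congr rfl
      intro i hi
      rw [Function.update_of_ne (Finset.ne_of_mem_erase hi)]
  have hQ : MS (insert j S) v w = Lmat (v j) (w j) * ∏ i ∈ Finset.univ.erase j,
      (if i ∈ S then Lmat (v i) (w i) else if v i = w i then 1 else 0) := by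
    unfold MS
    rw [← Finset.mul_prod_erase Finset.univ _ (Finset.mem_univ j)]
    congr 1
    · simp
    · apply Finset.prod_congr rfl
      intro i hi
      simp [Finset.mem_insert, Finset.ne_of_mem_erase hi]
  simp only [hP, hQ, mul_ite, ite_mul, mul_one, mul_zero, zero_mul, ← mul_assoc]
  rw [Finset.sum_ite_eq' Finset.univ (w j)]
  simp

lemma MS_empty {d : ℕ} : (MS (∅ : Finset (Fin d))) = 1 := by
  classical
  ext v w
  unfold MS
  by_cases h : v = w
  · subst h; simp [Matrix.one_apply]
  · obtain ⟨i, hi⟩ := Function.ne_iff.mp h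
    rw [Matrix.one_apply_ne h, Finset.prod_eq_zero (Finset.mem_univ i) (by simp [hi])]

lemma MS_univ (d : ℕ) : MS (Finset.univ : Finset (Fin d)) = LmatD d := by
  ext v w; unfold MS LmatD; simp

lemma rfold_eq {d : ℕ} (l : List (Fin d)) (hl : l.Nodup) (S : Finset (Fin d))
    (hS : ∀ j ∈ l, j ∉ S) (y : (Fin d → Fin 4) → ℝ) :
    l.foldl (fun acc j => (MS {j}).mulVec acc) ((MS S).mulVec y)
      = (MS (S ∪ l.toFinset)).mulVec y := by
  classical
  induction l generalizing S with
  | nil => simp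
  | cons j l ih =>
    simp only [List.foldl_cons]
    rw [Matrix.mulVec_mulVec, Mone_mul_MS j S (hS j (by simp)),
      ih (List.nodup_cons.mp hl).2 (insert j S)
        (fun i hi => by
          simp only [Finset.mem_insert, not_or]
          exact ⟨fun h => (List.nodup_cons.mp hl).1 (h ▸ hi), hS i (by simp [hi])⟩)]
    congr 1
    ext i
    simp [Finset.mem_insert, Finset.mem_union, List.mem_toFinset]

lemma Lmat_rowsum (r : Fin 4) : ∑ t, |Lmat r t| ≤ 1 := by
  fin_cases r <;> simp [Lmat, Fin.sum_univ_four] <;> norm_num [abs_of_nonneg]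

lemma Linv_rowsum (r : Fin 4) : ∑ t, |Linv r t| = 15/4 := by
  fin_cases r <;> simp [Linv, Fin.sum_univ_four] <;> norm_num [abs_of_nonneg]

lemma Linv_mul_Lmat : Linv * Lmat = 1 := by
  ext i j
  rw [Matrix.mul_apply, Fin.sum_univ_four]
  fin_cases i <;> fin_cases j <;>
    norm_num [Linv, Lmat, Matrix.one_apply, Fin.ext_iff, Matrix.cons_val_two, Matrix.cons_val_three, Matrix.tail_cons, Matrix.head_cons]

lemma LinvD_mul_LmatD (d : ℕ) : LinvD d * LmatD d = 1 := by
  classical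
  ext v w
  rw [Matrix.mul_apply]
  unfold LinvD LmatD
  have h1 : ∑ u : Fin d → Fin 4, (∏ j, Linv (v j) (u j)) * ∏ j, Lmat (u j) (w j)
      = ∑ u : Fin d → Fin 4, ∏ j, (Linv (v j) (u j) * Lmat (u j) (w j)) := by
    apply Finset.sum_congr rfl
    intro u _
    rw [Finset.prod_mul_distrib]
  rw [h1]
  have h2 : ∑ u : Fin d → Fin 4, ∏ j, (Linv (v j) (u j) * Lmat (u j) (w j))
      = ∏ j, ∑ t : Fin 4, Linv (v j) t * Lmat t (w j) := by
    rw [Finset.prod_univ_sum, Fintype.piFinset_univ]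
  rw [h2]
  have h3 : ∀ j, ∑ t : Fin 4, Linv (v j) t * Lmat t (w j)
      = (1 : Matrix (Fin 4) (Fin 4) ℝ) (v j) (w j) := by
    intro j
    rw [← Matrix.mul_apply, Linv_mul_Lmat]
  simp only [h3]
  by_cases h : v = w
  · subst h; simp [Matrix.one_apply]
  · obtain ⟨i, hi⟩ := Function.ne_iff.mp h
    rw [Matrix.one_apply_ne h, Finset.prod_eq_zero (Finset.mem_univ i)
      (by rw [Matrix.one_apply_ne hi])]

lemma LinvD_bound (d : ℕ) (y : (Fin d → Fin 4) → ℝ) (c : ℝ)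
    (hy : ∀ w, |y w| ≤ c) (v : Fin d → Fin 4) :
    |(LinvD d).mulVec y v| ≤ (15/4)^d * c := by
  classical
  have hc0 : 0 ≤ c := le_trans (abs_nonneg _) (hy v)
  have h0 : (LinvD d).mulVec y v = ∑ w, (∏ j, Linv (v j) (w j)) * y w := rfl
  rw [h0]
  have h1 : |∑ w : Fin d → Fin 4, (∏ j, Linv (v j) (w j)) * y w|
      ≤ ∑ w : Fin d → Fin 4, (∏ j, |Linv (v j) (w j)|) * c := by
    refine le_trans (Finset.abs_sum_le_sum_abs _ _) (Finset.sum_le_sum fun w _ => ?_)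
    rw [abs_mul, Finset.abs_prod]
    exact mul_le_mul_of_nonneg_left (hy w) (Finset.prod_nonneg fun _ _ => abs_nonneg _)
  refine le_trans h1 (le_of_eq ?_)
  rw [← Finset.sum_mul]
  congr 1
  have h2 : ∑ w : Fin d → Fin 4, ∏ j, |Linv (v j) (w j)|
      = ∏ j, ∑ t : Fin 4, |Linv (v j) t| := by
    rw [Finset.prod_univ_sum, Fintype.piFinset_univ]
  rw [h2]
  simp only [Linv_rowsum]
  rw [Finset.prod_const, Finset.card_univ, Fintype.card_fin]

lemma fold_err {d : ℕ} (l : List (Fin d)) (zz : (Fin d → Fin 4) → ℤ)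
    (y : (Fin d → Fin 4) → ℝ) (c : ℝ)
    (hc : ∀ v, |((zz v : ℤ) : ℝ) - y v| ≤ c) (v : Fin d → Fin 4) :
    |(((l.foldl (fun acc j => applyAlong j acc) zz) v : ℤ) : ℝ)
      - (l.foldl (fun acc j => (MS {j}).mulVec acc) y) v| ≤ c + 7/4 * l.length := by
  induction l generalizing zz y c v with
  | nil => simpa using hc v
  | cons j l ih =>
    simp only [List.foldl_cons, List.length_cons]
    have hc0 : (0:ℝ) ≤ c := le_trans (abs_nonneg _) (hc v)
    have step : ∀ v', |((applyAlong j zz v' : ℤ) : ℝ) - (MS {j}).mulVec y v'| ≤ c + 7/4 := by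
      intro v'
      have h1 := Ltilde_err (fun t => zz (Function.update v' j t)) (v' j)
      have h2 : (MS {j}).mulVec (fun u => ((zz u : ℤ) : ℝ)) v'
          = Matrix.mulVec Lmat (fun t => ((zz (Function.update v' j t) : ℤ) : ℝ)) (v' j) := by
        rw [Mone_mulVec]
        simp [Matrix.mulVec, dotProduct]
      have h3 : |(MS {j}).mulVec (fun u => ((zz u : ℤ):ℝ)) v' - (MS {j}).mulVec y v'| ≤ c := by
        rw [Mone_mulVec, Mone_mulVec]
        have e1 : ∑ t : Fin 4, Lmat (v' j) t * ((zz (Function.update v' j t) : ℤ):ℝ)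
            - ∑ t : Fin 4, Lmat (v' j) t * y (Function.update v' j t)
            = ∑ t : Fin 4, Lmat (v' j) t *
              (((zz (Function.update v' j t) : ℤ):ℝ) - y (Function.update v' j t)) := by
          rw [← Finset.sum_sub_distrib]
          exact Finset.sum_congr rfl fun t _ => by ring
        rw [e1]
        refine le_trans (Finset.abs_sum_le_sum_abs _ _) ?_
        have hb : ∑ t : Fin 4, |Lmat (v' j) t *
              (((zz (Function.update v' j t) : ℤ):ℝ) - y (Function.update v' j t))|
            ≤ ∑ t : Fin 4, |Lmat (v' j) t| * c := by
          refine Finset.sum_le_sum fun t _ => ?_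
          rw [abs_mul]
          exact mul_le_mul_of_nonneg_left (hc _) (abs_nonneg _)
        refine le_trans hb ?_
        rw [← Finset.sum_mul]
        calc (∑ t, |Lmat (v' j) t|) * c ≤ 1 * c :=
              mul_le_mul_of_nonneg_right (Lmat_rowsum _) hc0
          _ = c := one_mul c
      have h4 : ((applyAlong j zz v' : ℤ):ℝ) - (MS {j}).mulVec y v'
          = (((Ltilde (fun t => zz (Function.update v' j t)) (v' j) : ℤ):ℝ)
              - Matrix.mulVec Lmat (fun t => ((zz (Function.update v' j t):ℤ):ℝ)) (v' j))
            + ((MS {j}).mulVec (fun u => ((zz u:ℤ):ℝ)) v' - (MS {j}).mulVec y v') := by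
        rw [h2]
        unfold applyAlong
        ring
      rw [h4]
      exact le_trans (abs_add_le _ _) (by linarith)
    have hfin := ih (applyAlong j zz) ((MS {j}).mulVec y) (c + 7/4) step v
    push_cast
    push_cast at hfin
    linarith

lemma LtildeD_err {d : ℕ} (zz : (Fin d → Fin 4) → ℤ) (v : Fin d → Fin 4) :
    |((LtildeD zz v : ℤ):ℝ) - (LmatD d).mulVec (fun u => ((zz u:ℤ):ℝ)) v| ≤ 7/4 * d := by
  have h := fold_err (List.finRange d) zz (fun u => ((zz u:ℤ):ℝ)) 0 (by simp) v
  have h2 : (List.finRange d).foldl (fun acc j => (MS {j}).mulVec acc) (fun u => ((zz u:ℤ):ℝ))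
      = (LmatD d).mulVec (fun u => ((zz u:ℤ):ℝ)) := by
    conv_lhs => rw [show (fun u => ((zz u:ℤ):ℝ))
      = (MS (∅:Finset (Fin d))).mulVec (fun u => ((zz u:ℤ):ℝ)) from by
        rw [MS_empty, Matrix.one_mulVec]]
    rw [rfold_eq _ (List.nodup_finRange d) ∅ (by simp)]
    rw [show (∅ ∪ (List.finRange d).toFinset) = (Finset.univ : Finset (Fin d)) from by
      simp, MS_univ]
  rw [h2] at h
  simpa [LtildeD, List.length_finRange] using h

lemma nega_bound : ∀ N : ℕ, ∀ S : Finset ℕ, (∀ j ∈ S, j < N) →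
    3 * |∑ j ∈ S, (-2 : ℤ) ^ j| ≤ 2 ^ (N + 1) - 1 := by
  intro N
  induction N using Nat.strong_induction_on with
  | _ N ih =>
    match N with
    | 0 =>
      intro S hS
      have : S = ∅ := Finset.eq_empty_of_forall_notMem (fun j hj => Nat.not_lt_zero j (hS j hj))
      simp [this]
    | 1 =>
      intro S hS
      have hsub : S ⊆ {0} := fun j hj => by
        have := hS j hj
        simp only [Finset.mem_singleton]
        omega
      rcases Finset.subset_singleton_iff.mp hsub with h | h <;> simp [h]
    | (n+2) =>
      intro S hS
      rw [← Finset.sum_filter_add_sum_filter_not S (fun j => j < n)]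
      have h1 := ih n (by omega) (S.filter (fun j => j < n))
        (fun j hj => (Finset.mem_filter.mp hj).2)
      have hTsub : S.filter (fun j => ¬ j < n) ⊆ {n, n+1} := by
        intro j hj
        have h := Finset.mem_filter.mp hj
        have := hS j h.1
        simp only [Finset.mem_insert, Finset.mem_singleton]
        omega
      have h2 : |∑ j ∈ S.filter (fun j => ¬ j < n), (-2:ℤ)^j| ≤ 2^(n+1) := by
        have hinter : ({n, n+1} : Finset ℕ) ∩ S.filter (fun j => ¬ j < n)
            = S.filter (fun j => ¬ j < n) := Finset.inter_eq_right.mpr hTsub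
        have hsum : ∑ j ∈ S.filter (fun j => ¬ j < n), (-2:ℤ)^j
            = ∑ j ∈ ({n, n+1} : Finset ℕ),
                if j ∈ S.filter (fun j => ¬ j < n) then (-2:ℤ)^j else 0 := by
          rw [Finset.sum_ite_mem, hinter]
        rw [hsum, Finset.sum_insert (by simp), Finset.sum_singleton]
        have habs : |(-2:ℤ)^n| = 2^n := by rw [abs_pow]; norm_num
        have habs1 : |(-2:ℤ)^(n+1)| = 2^(n+1) := by rw [abs_pow]; norm_num
        have hps : (2:ℤ)^(n+1) = 2 * 2^n := by ring
        have h2n : (0:ℤ) < 2^n := by positivity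
        by_cases hn : n ∈ S.filter (fun j => ¬ j < n) <;>
          by_cases hn1 : n+1 ∈ S.filter (fun j => ¬ j < n) <;>
          simp only [hn, hn1, if_true, if_false]
        · have he : (-2:ℤ)^n + (-2)^(n+1) = -((-2)^n) := by ring
          rw [he, abs_neg, habs]
          linarith
        · rw [add_zero, habs]
          linarith
        · rw [zero_add, habs1]
        · simp
      have habs2 := abs_add_le (∑ j ∈ S.filter (fun j => j < n), (-2:ℤ)^j)
        (∑ j ∈ S.filter (fun j => ¬ j < n), (-2:ℤ)^j)
      have hpows : (2:ℤ)^(n+2+1) = 4 * 2^(n+1) := by ring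
      rw [hpows]
      have habs3 := abs_nonneg (∑ j ∈ S.filter (fun j => j < n), (-2:ℤ)^j)
      linarith

lemma flk_err (k : ℕ) (y : ℝ) : |flk k y - y| ≤ 2 ^ (1 - (k:ℤ)) * |y| := by
  by_cases hy : y = 0
  · simp [flk, hy]
  · unfold flk
    rw [if_neg hy]
    have hy0 : 0 < |y| := abs_pos.mpr hy
    set e : ℤ := ⌊Real.logb 2 |y|⌋ with he
    have h2e : (2:ℝ)^e ≤ |y| := by
      rw [he, show (2:ℝ) = ((2:ℕ):ℝ) by norm_num, Real.floor_logb_natCast (le_of_lt hy0)]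
      exact_mod_cast Int.zpow_log_le_self (by norm_num) hy0
    set s : ℝ := 2 ^ ((k:ℤ) - 1 - e) * |y| with hs
    set σ : ℝ := if 0 ≤ y then (1:ℝ) else -1 with hσ
    have hσa : |σ| = 1 := by
      rw [hσ]; by_cases h : 0 ≤ y <;> simp [h]
    have hpow : (2:ℝ)^(e - (k:ℤ) + 1) * (2:ℝ)^((k:ℤ) - 1 - e) = 1 := by
      rw [← zpow_add₀ (by norm_num : (2:ℝ) ≠ 0),
        show e - (k:ℤ) + 1 + ((k:ℤ) - 1 - e) = 0 by ring, zpow_zero]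
    have hy2 : y = σ * 2^(e - (k:ℤ) + 1) * s := by
      rw [hs, hσ]
      by_cases h : 0 ≤ y
      · simp only [if_pos h]
        rw [abs_of_nonneg h]
        field_simp
        nlinarith [hpow]
      · simp only [if_neg h]
        rw [abs_of_neg (lt_of_not_ge h)]
        nlinarith [hpow]
    have hfl1 : ((⌊s⌋ : ℤ):ℝ) ≤ s := Int.floor_le s
    have hfl2 : s - 1 < ((⌊s⌋ : ℤ):ℝ) := by linarith [Int.lt_floor_add_one s]
    have hdiff : σ * 2^(e - (k:ℤ) + 1) * ((⌊s⌋:ℤ):ℝ) - y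
        = σ * 2^(e - (k:ℤ) + 1) * (((⌊s⌋:ℤ):ℝ) - s) := by
      rw [hy2]; ring
    rw [hdiff, abs_mul, abs_mul, hσa, one_mul]
    have hp0 : (0:ℝ) < (2:ℝ)^(e - (k:ℤ) + 1) := by positivity
    rw [abs_of_pos hp0]
    have hfa : |((⌊s⌋:ℤ):ℝ) - s| ≤ 1 := by
      rw [abs_le]; constructor <;> linarith
    calc (2:ℝ)^(e - (k:ℤ) + 1) * |((⌊s⌋:ℤ):ℝ) - s| ≤ 2^(e - (k:ℤ) + 1) * 1 :=
          mul_le_mul_of_nonneg_left hfa (le_of_lt hp0)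
      _ = 2^(1 - (k:ℤ)) * 2^e := by
          rw [mul_one, ← zpow_add₀ (by norm_num : (2:ℝ) ≠ 0)]
          ring_nf
      _ ≤ 2^(1 - (k:ℤ)) * |y| := by
          exact mul_le_mul_of_nonneg_left h2e (by positivity)

end ZfpAux


set_option maxHeartbeats 1600000 in
/-- ZFP fixed-precision round-trip error bound: for `x ∈ ℝ^{4^d}`, `x ≠ 0`, with
`k`-bit floating-point components and precision parameter `0 ≤ β ≤ q − 2d + 2`,
compressing (Step 2 truncation `z`, lossy transform `w = 𝐿̃_d(z)`, negabinary
truncation `ŵ`) and decompressing (`u = L_d^{−1}·ŵ`, `x̂ = 2^ℓ·fl_k(u)`) satisfies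
`‖x̂ − x‖_∞ ≤ K_β·‖x‖_∞` with
`K_β = (15/4)^d·((1+ε_k)·((8/3)·ε_β + ε_q·(1+(8/3)·ε_β)·(k_L·(1+ε_q)+1)) + ε_k)`,
`ε_m = 2^{1−m}`, `k_L = (7/4)·(2^d − 1)`. -/
theorem zfp_roundtrip_error (d k q β : ℕ) (hd : 1 ≤ d)
    (hβ : (β : ℤ) ≤ (q : ℤ) - 2 * (d : ℤ) + 2)
    (x : (Fin d → Fin 4) → ℝ) (hx : x ≠ 0)
    (hfloat : ∀ v, ∃ (σ : ℝ) (m : ℕ) (t : ℤ),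
      (σ = 1 ∨ σ = -1) ∧ m < 2 ^ k ∧ x v = σ * (m : ℝ) * (2 : ℝ) ^ t)
    (emax ℓ : ℤ) (hemax : emax = ⌊Real.logb 2 ‖x‖⌋) (hℓ : ℓ = emax - (q : ℤ) + 1)
    (z : (Fin d → Fin 4) → ℤ)
    (hz : ∀ v, z v = (if 0 ≤ x v then 1 else -1) * ⌊(2 : ℝ) ^ (-ℓ) * |x v|⌋)
    (w : (Fin d → Fin 4) → ℤ) (hw : w = LtildeD z)
    (D : (Fin d → Fin 4) → (ℕ →₀ ℤ))
    (hD01 : ∀ v j, D v j = 0 ∨ D v j = 1)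
    (hDrep : ∀ v, w v = ∑ j ∈ (D v).support, D v j * (-2 : ℤ) ^ j)
    (what : (Fin d → Fin 4) → ℤ)
    (hwhat : ∀ v, what v =
      ∑ j ∈ (D v).support.filter (fun j : ℕ => (q : ℤ) + 1 - (β : ℤ) < (j : ℤ)),
        D v j * (-2 : ℤ) ^ j)
    (u : (Fin d → Fin 4) → ℝ) (hu : u = (LinvD d).mulVec (fun v => (what v : ℝ)))
    (xhat : (Fin d → Fin 4) → ℝ) (hxhat : ∀ v, xhat v = (2 : ℝ) ^ ℓ * flk k (u v)) :
    ‖xhat - x‖ ≤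
      (15 / 4 : ℝ) ^ d * ((1 + 2 ^ (1 - (k : ℤ))) * ((8 / 3) * 2 ^ (1 - (β : ℤ)) +
        2 ^ (1 - (q : ℤ)) * (1 + (8 / 3) * 2 ^ (1 - (β : ℤ))) *
          ((7 / 4) * ((2 : ℝ) ^ d - 1) * (1 + 2 ^ (1 - (q : ℤ))) + 1)) +
        2 ^ (1 - (k : ℤ))) * ‖x‖ := by
  classical
  have hX0 : 0 < ‖x‖ := norm_pos_iff.mpr hx
  set X : ℝ := ‖x‖ with hXdef
  set Ek : ℝ := (2:ℝ)^(1-(k:ℤ)) with hEkdef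
  set Eq : ℝ := (2:ℝ)^(1-(q:ℤ)) with hEqdef
  set Eβ : ℝ := (2:ℝ)^(1-(β:ℤ)) with hEβdef
  set C : ℝ := (15/4:ℝ)^d with hCdef
  have hEk0 : 0 < Ek := by rw [hEkdef]; positivity
  have hEq0 : 0 < Eq := by rw [hEqdef]; positivity
  have hEβ0 : 0 < Eβ := by rw [hEβdef]; positivity
  have hC0 : 0 < C := by rw [hCdef]; positivity
  have hC1 : (1:ℝ) ≤ C := by
    rw [hCdef]
    calc (1:ℝ) = 1^d := (one_pow d).symm
      _ ≤ (15/4)^d := pow_le_pow_left₀ (by norm_num) (by norm_num) d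
  have hd2 : (d:ℝ) ≤ (2:ℝ)^d - 1 := by
    have h := Nat.lt_two_pow_self (n := d)
    have : (d:ℝ) < (2:ℝ)^d := by exact_mod_cast h
    have h2 : ((d:ℝ) + 1) ≤ (2:ℝ)^d := by
      have : ((d + 1 : ℕ):ℝ) ≤ ((2^d : ℕ):ℝ) := by exact_mod_cast h
      push_cast at this
      linarith
    linarith
  have hemaxle : (2:ℝ)^emax ≤ X := by
    rw [hemax, hXdef, show (2:ℝ) = ((2:ℕ):ℝ) by norm_num,
      Real.floor_logb_natCast (le_of_lt hX0)]
    exact_mod_cast Int.zpow_log_le_self (by norm_num) hX0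
  have hxv : ∀ v, |x v| ≤ X := fun v => by
    have := norm_le_pi_norm x v
    simpa using this
  have hcancel : (2:ℝ)^ℓ * (2:ℝ)^(-ℓ) = 1 := by
    rw [← zpow_add₀ (by norm_num : (2:ℝ) ≠ 0), add_neg_cancel, zpow_zero]
  have h2ℓ0 : (0:ℝ) < (2:ℝ)^ℓ := by positivity
  -- Step 2 truncation error
  have hzy : ∀ v, |((z v : ℤ):ℝ) - (2:ℝ)^(-ℓ) * x v| ≤ 1 := by
    intro v
    have h1 : ((⌊(2:ℝ)^(-ℓ) * |x v|⌋ : ℤ):ℝ) ≤ (2:ℝ)^(-ℓ) * |x v| := Int.floor_le _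
    have h2 : (2:ℝ)^(-ℓ) * |x v| - 1 < ((⌊(2:ℝ)^(-ℓ) * |x v|⌋:ℤ):ℝ) := by
      linarith [Int.lt_floor_add_one ((2:ℝ)^(-ℓ) * |x v|)]
    have hzv := hz v
    by_cases hs : 0 ≤ x v
    · have hxa : |x v| = x v := abs_of_nonneg hs
      rw [if_pos hs, one_mul] at hzv
      rw [hzv, hxa]
      rw [hxa] at h1 h2
      rw [abs_le]
      constructor <;> linarith
    · have hxa : |x v| = -x v := abs_of_neg (lt_of_not_ge hs)
      rw [if_neg hs, neg_one_mul] at hzv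
      rw [hzv, hxa]
      rw [hxa] at h1 h2
      push_cast
      rw [abs_le]
      constructor <;> linarith
  -- lossy transform error
  have hE : ∀ v, |((w v:ℤ):ℝ) - (LmatD d).mulVec (fun u => ((z u:ℤ):ℝ)) v| ≤ 7/4 * d := by
    intro v
    rw [hw]
    exact LtildeD_err z v
  -- negabinary truncation error
  have hd1 : (1:ℤ) ≤ (d:ℤ) := by exact_mod_cast hd
  have hq2β : (0:ℤ) ≤ (q:ℤ) + 2 - β := by omega
  set N : ℕ := ((q:ℤ) + 2 - β).toNat with hNdef
  have hNz : (N:ℤ) = (q:ℤ) + 2 - β := Int.toNat_of_nonneg hq2β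
  have hT : ∀ v, |((what v:ℤ):ℝ) - ((w v:ℤ):ℝ)| ≤ (2/3) * (2:ℝ)^((q:ℤ)+2-(β:ℤ)) := by
    intro v
    have hsplit : w v - what v
        = ∑ j ∈ (D v).support.filter (fun j : ℕ => ¬ ((q:ℤ)+1-(β:ℤ) < (j:ℤ))),
            D v j * (-2:ℤ)^j := by
      rw [hDrep v, hwhat v]
      rw [← Finset.sum_filter_add_sum_filter_not ((D v).support)
        (fun j : ℕ => (q:ℤ)+1-(β:ℤ) < (j:ℤ)) (fun j => D v j * (-2:ℤ)^j)]
      ring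
    have hsub : ∑ j ∈ (D v).support.filter (fun j : ℕ => ¬ ((q:ℤ)+1-(β:ℤ) < (j:ℤ))),
          D v j * (-2:ℤ)^j
        = ∑ j ∈ ((D v).support.filter (fun j : ℕ => ¬ ((q:ℤ)+1-(β:ℤ) < (j:ℤ)))).filter
            (fun j => D v j = 1), (-2:ℤ)^j := by
      rw [← Finset.sum_filter_add_sum_filter_not
        ((D v).support.filter (fun j : ℕ => ¬ ((q:ℤ)+1-(β:ℤ) < (j:ℤ))))
        (fun j => D v j = 1) (fun j => D v j * (-2:ℤ)^j)]
      have hz2 : ∑ j ∈ ((D v).support.filter (fun j : ℕ => ¬ ((q:ℤ)+1-(β:ℤ) < (j:ℤ)))).filter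
          (fun j => ¬ D v j = 1), D v j * (-2:ℤ)^j = 0 := by
        refine Finset.sum_eq_zero fun j hj => ?_
        rcases hD01 v j with h|h
        · rw [h, zero_mul]
        · exact absurd h (Finset.mem_filter.mp hj).2
      rw [hz2, add_zero]
      exact Finset.sum_congr rfl fun j hj => by rw [(Finset.mem_filter.mp hj).2, one_mul]
    have hmem : ∀ j ∈ ((D v).support.filter (fun j : ℕ => ¬ ((q:ℤ)+1-(β:ℤ) < (j:ℤ)))).filter
        (fun j => D v j = 1), j < N := by
      intro j hj
      have h := (Finset.mem_filter.mp ((Finset.mem_filter.mp hj).1)).2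
      push_neg at h
      have : (j:ℤ) < (N:ℤ) := by omega
      exact_mod_cast this
    have hbound := nega_bound N _ hmem
    rw [← hsub, ← hsplit] at hbound
    -- cast to ℝ
    have hcast : |((what v:ℤ):ℝ) - ((w v:ℤ):ℝ)| = ((|w v - what v| : ℤ):ℝ) := by
      rw [abs_sub_comm]
      push_cast
      rfl
    rw [hcast]
    have hR : ((|w v - what v| : ℤ):ℝ) ≤ ((2^(N+1) - 1 : ℤ):ℝ)/3 := by
      rw [le_div_iff₀ (by norm_num : (0:ℝ) < 3)]
      calc ((|w v - what v| : ℤ):ℝ) * 3 = ((3 * |w v - what v| : ℤ):ℝ) := by push_cast; ring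
        _ ≤ ((2^(N+1) - 1 : ℤ):ℝ) := by exact_mod_cast hbound
    have h2N : ((2:ℝ))^(N:ℕ) = (2:ℝ)^((q:ℤ)+2-(β:ℤ)) := by
      rw [← zpow_natCast (2:ℝ) N, hNz]
    refine le_trans hR ?_
    have hcast2 : ((2^(N+1) - 1 : ℤ):ℝ) = 2*(2:ℝ)^((q:ℤ)+2-(β:ℤ)) - 1 := by
      push_cast
      rw [pow_succ, h2N]
      ring
    rw [hcast2]
    have hpos : (0:ℝ) < (2:ℝ)^((q:ℤ)+2-(β:ℤ)) := by positivity
    linarith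
  -- decompose u
  have hudecomp : u = (fun v => ((z v:ℤ):ℝ)) + (LinvD d).mulVec
      (fun v => ((what v:ℤ):ℝ) - (LmatD d).mulVec (fun u' => ((z u':ℤ):ℝ)) v) := by
    rw [hu]
    have hsplit2 : (fun v => ((what v:ℤ):ℝ)) = (LmatD d).mulVec (fun u' => ((z u':ℤ):ℝ))
        + (fun v => ((what v:ℤ):ℝ) - (LmatD d).mulVec (fun u' => ((z u':ℤ):ℝ)) v) := by
      funext v'
      simp
    rw [hsplit2, Matrix.mulVec_add, Matrix.mulVec_mulVec, LinvD_mul_LmatD, Matrix.one_mulVec]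
  have hFbound : ∀ v, |((what v:ℤ):ℝ) - (LmatD d).mulVec (fun u' => ((z u':ℤ):ℝ)) v|
      ≤ 7/4*(d:ℝ) + (2/3) * (2:ℝ)^((q:ℤ)+2-(β:ℤ)) := by
    intro v
    calc |((what v:ℤ):ℝ) - (LmatD d).mulVec (fun u' => ((z u':ℤ):ℝ)) v|
        ≤ |((what v:ℤ):ℝ) - ((w v:ℤ):ℝ)|
          + |((w v:ℤ):ℝ) - (LmatD d).mulVec (fun u' => ((z u':ℤ):ℝ)) v| :=
          abs_sub_le _ _ _
      _ ≤ (2/3) * (2:ℝ)^((q:ℤ)+2-(β:ℤ)) + 7/4*(d:ℝ) := add_le_add (hT v) (hE v)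
      _ = 7/4*(d:ℝ) + (2/3) * (2:ℝ)^((q:ℤ)+2-(β:ℤ)) := by ring
  set Δ : ℝ := 1 + C * (7/4*(d:ℝ) + (2/3) * (2:ℝ)^((q:ℤ)+2-(β:ℤ))) with hΔdef
  have huy : ∀ v, |u v - (2:ℝ)^(-ℓ) * x v| ≤ Δ := by
    intro v
    have h5 := LinvD_bound d _ _ hFbound v
    rw [hudecomp]
    have hre : ((fun v' => ((z v':ℤ):ℝ)) + (LinvD d).mulVec
        (fun v' => ((what v':ℤ):ℝ) - (LmatD d).mulVec (fun u' => ((z u':ℤ):ℝ)) v')) v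
          - (2:ℝ)^(-ℓ) * x v
        = (((z v:ℤ):ℝ) - (2:ℝ)^(-ℓ) * x v) + (LinvD d).mulVec
        (fun v' => ((what v':ℤ):ℝ) - (LmatD d).mulVec (fun u' => ((z u':ℤ):ℝ)) v') v := by
      simp [Pi.add_apply]
      ring
    rw [hre, hΔdef]
    refine le_trans (abs_add_le _ _) ?_
    rw [hCdef]
    exact add_le_add (hzy v) h5
  -- key scalar bounds
  have h2l : (2:ℝ)^ℓ ≤ Eq * X := by
    have : (2:ℝ)^ℓ = Eq * (2:ℝ)^emax := by
      rw [hEqdef, ← zpow_add₀ (by norm_num : (2:ℝ) ≠ 0), hℓ]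
      ring_nf
    rw [this]
    exact mul_le_mul_of_nonneg_left hemaxle (le_of_lt hEq0)
  have hmix : (2:ℝ)^ℓ * (2:ℝ)^((q:ℤ)+2-(β:ℤ)) ≤ 4 * (Eβ * X) := by
    have he1 : (2:ℝ)^ℓ * (2:ℝ)^((q:ℤ)+2-(β:ℤ)) = 4 * (Eβ * (2:ℝ)^emax) := by
      rw [hEβdef, ← zpow_add₀ (by norm_num : (2:ℝ) ≠ 0), ← zpow_add₀ (by norm_num : (2:ℝ) ≠ 0), hℓ]
      rw [show emax - (q:ℤ) + 1 + ((q:ℤ)+2-(β:ℤ)) = (1-(β:ℤ)) + emax + 2 by ring]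
      rw [zpow_add₀ (by norm_num : (2:ℝ) ≠ 0), zpow_add₀ (by norm_num : (2:ℝ) ≠ 0)]
      norm_num
      ring
    rw [he1]
    have := mul_le_mul_of_nonneg_left hemaxle (le_of_lt hEβ0)
    linarith
  have hDelta : (2:ℝ)^ℓ * Δ ≤ Eq * X + C * ((7/4*(d:ℝ)) * (Eq * X) + (8/3) * (Eβ * X)) := by
    have hexp : (2:ℝ)^ℓ * Δ = (2:ℝ)^ℓ
        + C * ((7/4*(d:ℝ)) * (2:ℝ)^ℓ + (2/3) * ((2:ℝ)^ℓ * (2:ℝ)^((q:ℤ)+2-(β:ℤ)))) := by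
      rw [hΔdef]; ring
    rw [hexp]
    have t2 : (7/4*(d:ℝ)) * (2:ℝ)^ℓ ≤ (7/4*(d:ℝ)) * (Eq * X) :=
      mul_le_mul_of_nonneg_left h2l (by positivity)
    have t3 : (2/3) * ((2:ℝ)^ℓ * (2:ℝ)^((q:ℤ)+2-(β:ℤ))) ≤ (8/3) * (Eβ * X) := by linarith
    have := mul_le_mul_of_nonneg_left (add_le_add t2 t3) (le_of_lt hC0)
    linarith
  -- per-component bound
  have hcomp : ∀ v, |xhat v - x v| ≤ Ek * X + (1+Ek) * ((2:ℝ)^ℓ * Δ) := by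
    intro v
    have hflk := flk_err k (u v)
    have habs_u : |u v| ≤ (2:ℝ)^(-ℓ) * X + Δ := by
      have h7 : |u v| ≤ |u v - (2:ℝ)^(-ℓ) * x v| + |(2:ℝ)^(-ℓ) * x v| := by
        calc |u v| = |(u v - (2:ℝ)^(-ℓ) * x v) + (2:ℝ)^(-ℓ) * x v| := by ring_nf
          _ ≤ _ := abs_add_le _ _
      have h8 : |(2:ℝ)^(-ℓ) * x v| ≤ (2:ℝ)^(-ℓ) * X := by
        rw [abs_mul, abs_of_pos (by positivity : (0:ℝ) < (2:ℝ)^(-ℓ))]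
        exact mul_le_mul_of_nonneg_left (hxv v) (by positivity)
      linarith [huy v]
    have hxhatv : xhat v - x v = (2:ℝ)^ℓ * (flk k (u v) - u v)
        + (2:ℝ)^ℓ * (u v - (2:ℝ)^(-ℓ) * x v) := by
      rw [hxhat v]
      have hc2 : (2:ℝ)^ℓ * ((2:ℝ)^(-ℓ) * x v) = x v := by
        rw [← mul_assoc, hcancel, one_mul]
      calc (2:ℝ)^ℓ * flk k (u v) - x v
          = (2:ℝ)^ℓ * (flk k (u v) - u v) + (2:ℝ)^ℓ * (u v - (2:ℝ)^(-ℓ) * x v)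
            + ((2:ℝ)^ℓ * ((2:ℝ)^(-ℓ) * x v) - x v) := by ring
        _ = _ := by rw [hc2]; ring
    have step1 : |xhat v - x v| ≤ (2:ℝ)^ℓ * |flk k (u v) - u v|
        + (2:ℝ)^ℓ * |u v - (2:ℝ)^(-ℓ) * x v| := by
      rw [hxhatv]
      refine le_trans (abs_add_le _ _) ?_
      rw [abs_mul, abs_mul, abs_of_pos h2ℓ0]
    have s2 : (2:ℝ)^ℓ * |flk k (u v) - u v| ≤ (2:ℝ)^ℓ * (Ek * |u v|) := by
      refine mul_le_mul_of_nonneg_left ?_ (le_of_lt h2ℓ0)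
      rw [hEkdef]
      exact hflk
    have s3 : ((2:ℝ)^ℓ * Ek) * |u v| ≤ ((2:ℝ)^ℓ * Ek) * ((2:ℝ)^(-ℓ) * X + Δ) :=
      mul_le_mul_of_nonneg_left habs_u (by positivity)
    have hexp2 : ((2:ℝ)^ℓ * Ek) * ((2:ℝ)^(-ℓ) * X + Δ) = Ek * X + Ek * ((2:ℝ)^ℓ * Δ) := by
      calc ((2:ℝ)^ℓ * Ek) * ((2:ℝ)^(-ℓ) * X + Δ)
          = ((2:ℝ)^ℓ * (2:ℝ)^(-ℓ)) * (Ek * X) + Ek * ((2:ℝ)^ℓ * Δ) := by ring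
        _ = Ek * X + Ek * ((2:ℝ)^ℓ * Δ) := by rw [hcancel, one_mul]
    have s4 : (2:ℝ)^ℓ * |u v - (2:ℝ)^(-ℓ) * x v| ≤ (2:ℝ)^ℓ * Δ :=
      mul_le_mul_of_nonneg_left (huy v) (le_of_lt h2ℓ0)
    have e0 : (2:ℝ)^ℓ*(Ek*|u v|) = ((2:ℝ)^ℓ*Ek)*|u v| := by ring
    linarith [step1, s2, s3, s4, hexp2, e0]
  -- scalar coefficient inequality
  set P : ℝ := (7/4)*((2:ℝ)^d - 1) with hPdef
  have hP0 : (0:ℝ) ≤ P := by rw [hPdef]; nlinarith [hd2, (Nat.cast_nonneg d : (0:ℝ) ≤ (d:ℝ))]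
  have hPd : 7/4*(d:ℝ) ≤ P := by rw [hPdef]; linarith
  have hA : 1 + 7/4*(d:ℝ) ≤ (1+(8/3)*Eβ)*(P*(1+Eq)+1) := by
    nlinarith [mul_nonneg hP0 (le_of_lt hEq0),
      mul_nonneg (le_of_lt hEβ0) (by nlinarith [mul_nonneg hP0 (le_of_lt hEq0)] : (0:ℝ) ≤ P*(1+Eq)+1)]
  have hB : Eq + 7/4*(d:ℝ)*Eq + (8/3)*Eβ ≤ (8/3)*Eβ + Eq*((1+(8/3)*Eβ)*(P*(1+Eq)+1)) := by
    nlinarith [mul_le_mul_of_nonneg_left hA (le_of_lt hEq0)]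
  have hC2 : Eq + C*((7/4*(d:ℝ))*Eq + (8/3)*Eβ)
      ≤ C*((8/3)*Eβ + Eq*(1+(8/3)*Eβ)*(P*(1+Eq)+1)) := by
    have hBC := mul_le_mul_of_nonneg_left hB (le_of_lt hC0)
    nlinarith [hBC, hC1, hEq0]
  have hcoef : Ek * X + (1+Ek) * (Eq * X + C * ((7/4*(d:ℝ)) * (Eq * X) + (8/3) * (Eβ * X)))
      ≤ C * ((1 + Ek) * ((8/3) * Eβ + Eq * (1 + (8/3) * Eβ) * (P * (1 + Eq) + 1)) + Ek) * X := by
    have hl : Ek * X + (1+Ek) * (Eq * X + C * ((7/4*(d:ℝ)) * (Eq * X) + (8/3) * (Eβ * X)))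
        = (Ek + (1+Ek) * (Eq + C * ((7/4*(d:ℝ)) * Eq + (8/3) * Eβ))) * X := by ring
    rw [hl]
    refine mul_le_mul_of_nonneg_right ?_ (le_of_lt hX0)
    have h9 := mul_le_mul_of_nonneg_left hC2 (by positivity : (0:ℝ) ≤ 1 + Ek)
    nlinarith [h9, hC1, hEk0]
  -- conclude
  have hRHS0 : (0:ℝ) ≤ C * ((1 + Ek) * ((8/3) * Eβ + Eq * (1 + (8/3) * Eβ) * (P * (1 + Eq) + 1)) + Ek) * X := by
    have hq1 : (0:ℝ) ≤ P * (1 + Eq) + 1 := by nlinarith [mul_nonneg hP0 (le_of_lt hEq0)]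
    have hq2 : (0:ℝ) ≤ (8/3) * Eβ + Eq * (1 + (8/3) * Eβ) * (P * (1 + Eq) + 1) := by
      have := mul_nonneg (mul_nonneg (le_of_lt hEq0)
        (by positivity : (0:ℝ) ≤ 1 + (8/3) * Eβ)) hq1
      nlinarith [hEβ0]
    have hq3 : (0:ℝ) ≤ (1 + Ek) * ((8/3) * Eβ + Eq * (1 + (8/3) * Eβ) * (P * (1 + Eq) + 1)) + Ek :=
      add_nonneg (mul_nonneg (by positivity) hq2) (le_of_lt hEk0)
    exact mul_nonneg (mul_nonneg (le_of_lt hC0) hq3) (le_of_lt hX0)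
  rw [show (15 / 4 : ℝ) ^ d * ((1 + 2 ^ (1 - (k : ℤ))) * ((8 / 3) * 2 ^ (1 - (β : ℤ)) +
        2 ^ (1 - (q : ℤ)) * (1 + (8 / 3) * 2 ^ (1 - (β : ℤ))) *
          ((7 / 4) * ((2 : ℝ) ^ d - 1) * (1 + 2 ^ (1 - (q : ℤ))) + 1)) +
        2 ^ (1 - (k : ℤ))) * ‖x‖
      = C * ((1 + Ek) * ((8/3) * Eβ + Eq * (1 + (8/3) * Eβ) * (P * (1 + Eq) + 1)) + Ek) * X from by
    rw [hCdef, hEkdef, hEqdef, hEβdef, hPdef, hXdef]]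
  rw [pi_norm_le_iff_of_nonneg hRHS0]
  intro v
  have := hcomp v
  have hnv : ‖(xhat - x) v‖ = |xhat v - x v| := by simp [Real.norm_eq_abs]
  rw [hnv]
  calc |xhat v - x v| ≤ Ek * X + (1+Ek) * ((2:ℝ)^ℓ * Δ) := hcomp v
    _ ≤ Ek * X + (1+Ek) * (Eq * X + C * ((7/4*(d:ℝ)) * (Eq * X) + (8/3) * (Eβ * X))) := by
        have := mul_le_mul_of_nonneg_left hDelta (by positivity : (0:ℝ) ≤ 1 + Ek)
        linarith
    _ ≤ _ := hcoef
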